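/- Let X : ℝ → Matrix n n ℂ (n a nonempty finite type) be entrywise differentiable at t₀ with derivative X', and suppose X(t₀) is invertible. Then the real-valued function t ↦ ‖X(t)‖₁ is differentiable at t₀, with derivative equal to the real part of trace( |X(t₀)|⁻¹ · X(t₀)ᴴ · X' ). -/

import Mathlib

open Matrix
open scoped ComplexOrder

/-- The matrix absolute value `|X|`: the unique positive semidefinite square root of `Xᴴ * X`. -/
noncomputable def matAbs {n : Type*} [Fintype n] [DecidableEq n] (X : Matrix n n ℂ) :
    Matrix n n ℂ :=
  (Matrix.posSemidef_conjTranspose_mul_self X).1.eigenvectorUnitary.1 *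
    diagonal ((↑) ∘ (√·) ∘ (Matrix.posSemidef_conjTranspose_mul_self X).1.eigenvalues) *
    (star (Matrix.posSemidef_conjTranspose_mul_self X).1.eigenvectorUnitary : Matrix n n ℂ)

/-- The trace norm `‖X‖₁ = trace |X|` (a real number). -/
noncomputable def traceNorm {n : Type*} [Fintype n] [DecidableEq n] (X : Matrix n n ℂ) : ℝ :=
  ((matAbs X).trace).re

section Aux

open scoped Matrix.Norms.L2Operator

set_option linter.unusedSectionVars false

variable {n : Type*} [Fintype n] [DecidableEq n]

open scoped MatrixOrder in
private noncomputable def msqrt (A : Matrix n n ℂ) : Matrix n n ℂ := CFC.sqrt A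

open scoped MatrixOrder in
private lemma msqrt_psd {A : Matrix n n ℂ} (_hA : A.PosSemidef) : (msqrt A).PosSemidef :=
  (CFC.sqrt_nonneg A).posSemidef

open scoped MatrixOrder in
private lemma msqrt_mul_self {A : Matrix n n ℂ} (hA : A.PosSemidef) : msqrt A * msqrt A = A :=
  CFC.sqrt_mul_sqrt_self A hA.nonneg

open scoped MatrixOrder in
private lemma eq_msqrt_of_sq_eq {A B : Matrix n n ℂ} (hB : B.PosSemidef) (hA : A.PosSemidef)
    (h : B ^ 2 = A) : B = msqrt A :=
  ((CFC.sqrt_eq_iff A B hA.nonneg hB.nonneg).mpr (by rw [← pow_two, h])).symm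

open scoped MatrixOrder in
private lemma matAbs_eq (X : Matrix n n ℂ) : matAbs X = msqrt (Xᴴ * X) := by
  have hA := posSemidef_conjTranspose_mul_self X
  rw [msqrt, CFC.sqrt_eq_cfc, cfc_nnreal_eq_real _ _ hA.nonneg, hA.1.cfc_eq]
  simp [matAbs, IsHermitian.cfc, Function.comp_def, max_eq_left (hA.eigenvalues_nonneg _)]

private lemma hasDerivAt_entrywise {X : ℝ → Matrix n n ℂ} {X' : Matrix n n ℂ} {t₀ : ℝ}
    (hX : ∀ i j, HasDerivAt (fun t => X t i j) (X' i j) t₀) :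
    HasDerivAt X X' t₀ := by
  have key : ∀ (M : Matrix n n ℂ), M = ∑ i : n, ∑ j : n, M i j • single i j (1 : ℂ) := by
    intro M
    conv_lhs => rw [matrix_eq_sum_single M]
    refine Finset.sum_congr rfl fun i _ => Finset.sum_congr rfl fun j _ => ?_
    rw [smul_single, smul_eq_mul, mul_one]
  have h : HasDerivAt (fun t => ∑ i : n, ∑ j : n, X t i j • single i j (1 : ℂ))
      (∑ i : n, ∑ j : n, X' i j • single i j (1 : ℂ)) t₀ :=
    HasDerivAt.fun_sum fun i _ => HasDerivAt.fun_sum fun j _ => (hX i j).smul_const _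
  rw [← key] at h
  convert h using 1
  ext t : 1
  exact key (X t)

private lemma trace_conjT_mul_self_nonneg (M : Matrix n n ℂ) : 0 ≤ (Mᴴ * M).trace := by
  rw [Matrix.trace]
  refine Finset.sum_nonneg fun j _ => ?_
  rw [Matrix.diag_apply, Matrix.mul_apply]
  exact Finset.sum_nonneg fun i _ => by
    simpa [Matrix.conjTranspose_apply] using star_mul_self_nonneg (M i j)

private lemma eq_zero_of_trace_conjT_mul_self (M : Matrix n n ℂ)
    (h : (Mᴴ * M).trace = 0) : M = 0 := by
  ext i j
  have h0 : ∀ k ∈ Finset.univ, (0:ℂ) ≤ (Mᴴ * M).diag k := fun k _ => by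
    rw [Matrix.diag_apply, Matrix.mul_apply]
    exact Finset.sum_nonneg fun l _ => by
      simpa [Matrix.conjTranspose_apply] using star_mul_self_nonneg (M l k)
  have hdiag := (Finset.sum_eq_zero_iff_of_nonneg h0).mp h j (Finset.mem_univ j)
  rw [Matrix.diag_apply, Matrix.mul_apply] at hdiag
  have h1 : ∀ l ∈ Finset.univ, (0:ℂ) ≤ Mᴴ j l * M l j := fun l _ => by
    simpa [Matrix.conjTranspose_apply] using star_mul_self_nonneg (M l j)
  have := (Finset.sum_eq_zero_iff_of_nonneg h1).mp hdiag i (Finset.mem_univ i)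
  rw [Matrix.conjTranspose_apply] at this
  rcases mul_eq_zero.mp this with h' | h'
  · simpa using congrArg star h'
  · simpa using h'

/-- The Sylvester operator `H ↦ S * H + H * S`. -/
private noncomputable def sylv (S : Matrix n n ℂ) : Matrix n n ℂ →ₗ[ℂ] Matrix n n ℂ :=
  LinearMap.mulLeft ℂ S + LinearMap.mulRight ℂ S

@[simp] private lemma sylv_apply (S H : Matrix n n ℂ) : sylv S H = S * H + H * S := rfl

private lemma sylv_injective {S : Matrix n n ℂ} (hS : S.PosDef) :
    Function.Injective (sylv S) := by
  have hPSD := hS.posSemidef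
  set B := msqrt S with hBdef
  have hBherm : Bᴴ = B := (msqrt_psd hPSD).1
  have hBB : B * B = S := msqrt_mul_self hPSD
  have hBunit : IsUnit B := by
    rw [Matrix.isUnit_iff_isUnit_det]
    have : B.det * B.det = S.det := by rw [← Matrix.det_mul, hBB]
    exact isUnit_of_mul_isUnit_left (this ▸ hS.det_pos.ne'.isUnit)
  rw [injective_iff_map_eq_zero]
  intro H hH
  rw [sylv_apply] at hH
  have key : (Hᴴ * (S * H + H * S)).trace = 0 := by rw [hH, Matrix.mul_zero, Matrix.trace_zero]
  have expand : (Hᴴ * (S * H + H * S)).trace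
      = ((B * H)ᴴ * (B * H)).trace + ((H * B)ᴴ * (H * B)).trace := by
    rw [Matrix.mul_add, Matrix.trace_add]
    congr 1
    · rw [Matrix.conjTranspose_mul, hBherm]
      rw [← hBB]
      noncomm_ring
    · rw [Matrix.conjTranspose_mul, hBherm, ← hBB]
      rw [show Hᴴ * (H * (B * B)) = (Hᴴ * H * B) * B by noncomm_ring,
        Matrix.trace_mul_comm]
      noncomm_ring
  rw [expand] at key
  have h1 := trace_conjT_mul_self_nonneg (B * H)
  have h2 := trace_conjT_mul_self_nonneg (H * B)
  have hHB : H * B = 0 := by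
    apply eq_zero_of_trace_conjT_mul_self
    have hb : ((H * B)ᴴ * (H * B)).trace = -(((B * H)ᴴ * (B * H)).trace) := by
      linear_combination key
    have : ((H * B)ᴴ * (H * B)).trace ≤ 0 := by
      rw [hb]; exact neg_nonpos.mpr h1
    exact le_antisymm this h2
  calc H = H * B * B⁻¹ := by
        rw [Matrix.mul_assoc,
          Matrix.mul_nonsing_inv _ ((Matrix.isUnit_iff_isUnit_det B).mp hBunit), Matrix.mul_one]
    _ = 0 := by rw [hHB, Matrix.zero_mul]

/-- The Sylvester operator as a continuous linear equivalence. -/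
private noncomputable def sylvCLE {S : Matrix n n ℂ} (hS : S.PosDef) :
    Matrix n n ℂ ≃L[ℂ] Matrix n n ℂ :=
  (LinearEquiv.ofInjectiveEndo (sylv S) (sylv_injective hS)).toContinuousLinearEquiv

@[simp] private lemma sylvCLE_apply {S : Matrix n n ℂ} (hS : S.PosDef) (H : Matrix n n ℂ) :
    sylvCLE hS H = S * H + H * S := rfl

private lemma hasStrictFDerivAt_sq {S : Matrix n n ℂ} (hS : S.PosDef) :
    HasStrictFDerivAt (fun M : Matrix n n ℂ => M * M)
      (sylvCLE hS : Matrix n n ℂ →L[ℂ] Matrix n n ℂ) S := by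
  have h := (hasStrictFDerivAt_id (𝕜 := ℂ) S).mul' (hasStrictFDerivAt_id (𝕜 := ℂ) S)
  exact h.congr_fderiv (by ext H : 1; simp [sylvCLE_apply])

/-- dot product as Euclidean inner product. -/
private lemma dotProduct_eq_inner (x y : n → ℂ) :
    star x ⬝ᵥ y = @inner ℂ (EuclideanSpace ℂ n) _
      ((WithLp.equiv 2 (n → ℂ)).symm x) ((WithLp.equiv 2 (n → ℂ)).symm y) := by
  simp only [PiLp.inner_apply, RCLike.inner_apply, PiLp.toLp_apply]
  simp [dotProduct, mul_comm]

private lemma norm_dotProduct_mulVec_le (N : Matrix n n ℂ) (x : n → ℂ) :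
    ‖star x ⬝ᵥ N *ᵥ x‖ ≤ ‖N‖ * ‖(WithLp.equiv 2 (n → ℂ)).symm x‖ ^ 2 := by
  set x' : EuclideanSpace ℂ n := (WithLp.equiv 2 (n → ℂ)).symm x
  rw [dotProduct_eq_inner]
  calc ‖@inner ℂ (EuclideanSpace ℂ n) _ x' ((WithLp.equiv 2 (n → ℂ)).symm (N *ᵥ x))‖
      ≤ ‖x'‖ * ‖(WithLp.equiv 2 (n → ℂ)).symm (N *ᵥ x)‖ := norm_inner_le_norm _ _
    _ ≤ ‖x'‖ * (‖N‖ * ‖x'‖) := by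
        have := Matrix.l2_opNorm_mulVec N x'
        gcongr
        exact this
    _ = ‖N‖ * ‖x'‖ ^ 2 := by ring

private lemma eventually_posDef {S : Matrix n n ℂ} [Nonempty n] (hS : S.PosDef) :
    ∀ᶠ M in nhds S, M.IsHermitian → M.PosDef := by
  classical
  have hPSD := hS.posSemidef
  set B := msqrt S with hBdef
  have hBherm : Bᴴ = B := (msqrt_psd hPSD).1
  have hBB : B * B = S := msqrt_mul_self hPSD
  have hBdet : IsUnit B.det := by
    have : B.det * B.det = S.det := by rw [← Matrix.det_mul, hBB]
    exact isUnit_of_mul_isUnit_left (this ▸ hS.det_pos.ne'.isUnit)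
  have hBinv_pos : 0 < ‖B⁻¹‖ := by
    rw [norm_pos_iff]
    intro h0
    have h1 : B * B⁻¹ = 1 := Matrix.mul_nonsing_inv B hBdet
    rw [h0, Matrix.mul_zero] at h1
    have := congrFun (congrFun h1 (Classical.arbitrary n)) (Classical.arbitrary n)
    simp [Matrix.one_apply] at this
  set ε : ℝ := (‖B⁻¹‖ ^ 2)⁻¹ / 2 with hε
  have hεpos : 0 < ε := by positivity
  filter_upwards [Metric.ball_mem_nhds S hεpos] with M hM hherm
  rw [Metric.mem_ball, dist_eq_norm] at hM
  refine Matrix.PosDef.of_dotProduct_mulVec_pos hherm fun x hx => ?_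
  set z := star x ⬝ᵥ M *ᵥ x with hz
  have hzstar : star z = z := by
    calc star z = star (M *ᵥ x) ⬝ᵥ x := by rw [hz, Matrix.star_dotProduct, star_star]
      _ = star x ⬝ᵥ Mᴴ *ᵥ x := by rw [Matrix.star_mulVec, Matrix.dotProduct_mulVec]
      _ = z := by rw [hherm.eq, hz]
  have him : z.im = 0 := Complex.conj_eq_iff_im.mp hzstar
  set y : n → ℂ := B *ᵥ x with hy
  set x' : EuclideanSpace ℂ n := (WithLp.equiv 2 (n → ℂ)).symm x with hx'
  set y' : EuclideanSpace ℂ n := (WithLp.equiv 2 (n → ℂ)).symm y with hy'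
  have hSx : star x ⬝ᵥ S *ᵥ x = (‖y'‖ : ℂ) ^ 2 := by
    have h1 : star x ⬝ᵥ S *ᵥ x = star y ⬝ᵥ y := by
      calc star x ⬝ᵥ S *ᵥ x = star x ⬝ᵥ (B * B) *ᵥ x := by rw [hBB]
        _ = star x ⬝ᵥ B *ᵥ (B *ᵥ x) := by rw [Matrix.mulVec_mulVec]
        _ = (star x ᵥ* B) ⬝ᵥ (B *ᵥ x) := by rw [Matrix.dotProduct_mulVec]
        _ = star (B *ᵥ x) ⬝ᵥ (B *ᵥ x) := by rw [Matrix.star_mulVec, hBherm]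
    rw [h1, dotProduct_eq_inner, ← hy']
    exact inner_self_eq_norm_sq_to_K y'
  have hxy : ‖x'‖ ≤ ‖B⁻¹‖ * ‖y'‖ := by
    have hxeq : x = B⁻¹ *ᵥ y := by
      rw [hy, Matrix.mulVec_mulVec, Matrix.nonsing_inv_mul B hBdet, Matrix.one_mulVec]
    have := Matrix.l2_opNorm_mulVec B⁻¹ y'
    simpa [hx', hxeq, hy'] using this
  have hx'pos : 0 < ‖x'‖ := by
    rw [norm_pos_iff]
    simpa [hx'] using hx
  have hpert : |(star x ⬝ᵥ (M - S) *ᵥ x).re| ≤ ‖M - S‖ * ‖x'‖ ^ 2 := by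
    refine le_trans (Complex.abs_re_le_norm _) ?_
    simpa [hx'] using norm_dotProduct_mulVec_le (M - S) x
  have hzdec : z.re = (star x ⬝ᵥ S *ᵥ x).re + (star x ⬝ᵥ (M - S) *ᵥ x).re := by
    rw [hz, ← Complex.add_re]
    congr 1
    rw [Matrix.sub_mulVec, dotProduct_sub]
    ring
  have hre : 0 < z.re := by
    have h2 : (star x ⬝ᵥ S *ᵥ x).re = ‖y'‖ ^ 2 := by
      rw [hSx]
      simp [← Complex.ofReal_pow]
    have h3 : ‖x'‖ ^ 2 ≤ ‖B⁻¹‖ ^ 2 * ‖y'‖ ^ 2 := by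
      calc ‖x'‖ ^ 2 ≤ (‖B⁻¹‖ * ‖y'‖) ^ 2 := by
            exact pow_le_pow_left₀ (norm_nonneg _) hxy 2
        _ = ‖B⁻¹‖ ^ 2 * ‖y'‖ ^ 2 := by ring
    rw [hzdec, h2]
    have h4 : ‖M - S‖ * ‖x'‖ ^ 2 < ε * ‖x'‖ ^ 2 := by
      apply mul_lt_mul_of_pos_right hM (by positivity)
    have h5 : (‖B⁻¹‖ ^ 2)⁻¹ * ‖x'‖ ^ 2 ≤ ‖y'‖ ^ 2 := by
      rw [inv_mul_le_iff₀ (by positivity)]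
      exact h3
    have habs := abs_le.mp hpert
    have hεeq : (‖B⁻¹‖ ^ 2)⁻¹ = 2 * ε := by rw [hε]; ring
    nlinarith [hx'pos, sq_nonneg ‖x'‖]
  rw [show (0 : ℂ) = ⟨0, 0⟩ from rfl]
  rw [Complex.lt_def]
  exact ⟨by simpa using hre, by simp [him]⟩

-- MAIN
private theorem traceNorm_hasDerivAt_aux {n : Type*} [Fintype n] [DecidableEq n] [Nonempty n]
    (X : ℝ → Matrix n n ℂ) (X' : Matrix n n ℂ) (t₀ : ℝ)
    (hX : ∀ i j, HasDerivAt (fun t => X t i j) (X' i j) t₀)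
    (hinv : IsUnit (X t₀)) :
    HasDerivAt (fun t => traceNorm (X t))
      ((((matAbs (X t₀))⁻¹ * (X t₀)ᴴ * X').trace).re) t₀ := by
  classical
  -- derivative of the path and its conjugate transpose
  have hXd : HasDerivAt X X' t₀ := hasDerivAt_entrywise hX
  have hXHd : HasDerivAt (fun t => (X t)ᴴ) X'ᴴ t₀ := by
    apply hasDerivAt_entrywise
    intro i j
    simpa [Matrix.conjTranspose_apply] using (hX j i).star
  set A : ℝ → Matrix n n ℂ := fun t => (X t)ᴴ * X t with hAdef
  set A' : Matrix n n ℂ := X'ᴴ * X t₀ + (X t₀)ᴴ * X' with hA'def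
  have hAd : HasDerivAt A A' t₀ := hXHd.fun_mul hXd
  set S₀ : Matrix n n ℂ := matAbs (X t₀) with hS₀def
  have hA₀PSD : (A t₀).PosSemidef := posSemidef_conjTranspose_mul_self _
  -- A t₀ is positive definite
  have hA₀PD : (A t₀).PosDef := by
    refine Matrix.PosDef.of_dotProduct_mulVec_pos (isHermitian_conjTranspose_mul_self _) fun x hx => ?_
    have h1 : star x ⬝ᵥ A t₀ *ᵥ x = star (X t₀ *ᵥ x) ⬝ᵥ (X t₀ *ᵥ x) := by
      calc star x ⬝ᵥ ((X t₀)ᴴ * X t₀) *ᵥ x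
          = star x ⬝ᵥ (X t₀)ᴴ *ᵥ (X t₀ *ᵥ x) := by rw [Matrix.mulVec_mulVec]
        _ = (star x ᵥ* (X t₀)ᴴ) ⬝ᵥ (X t₀ *ᵥ x) := by rw [Matrix.dotProduct_mulVec]
        _ = star (X t₀ *ᵥ x) ⬝ᵥ (X t₀ *ᵥ x) := by rw [Matrix.star_mulVec]
    rw [h1]
    rw [Matrix.dotProduct_star_self_pos_iff]
    intro h0
    apply hx
    have hinj := Matrix.mulVec_injective_iff_isUnit.mpr hinv
    apply hinj
    simpa using h0
  have hsq : S₀ * S₀ = A t₀ := by rw [hS₀def, matAbs_eq]; exact msqrt_mul_self hA₀PSD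
  have hS₀PSD : S₀.PosSemidef := by rw [hS₀def, matAbs_eq]; exact msqrt_psd hA₀PSD
  have hS₀PD : S₀.PosDef := by
    refine Matrix.PosDef.of_dotProduct_mulVec_pos hS₀PSD.1 fun x hx => lt_of_le_of_ne (hS₀PSD.dotProduct_mulVec_nonneg x) (Ne.symm ?_)
    intro h0
    have hS₀x : S₀ *ᵥ x = 0 := (hS₀PSD.dotProduct_mulVec_zero_iff x).mp h0
    have : star x ⬝ᵥ A t₀ *ᵥ x = 0 := by
      rw [← hsq, ← Matrix.mulVec_mulVec, hS₀x, Matrix.mulVec_zero, dotProduct_zero]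
    exact (hA₀PD.dotProduct_mulVec_pos hx).ne' this
  -- inverse function theorem setup
  set f : Matrix n n ℂ → Matrix n n ℂ := fun M => M * M with hfdef
  have hf : HasStrictFDerivAt f ((sylvCLE hS₀PD : Matrix n n ℂ →L[ℂ] Matrix n n ℂ)) S₀ :=
    hasStrictFDerivAt_sq hS₀PD
  set g : Matrix n n ℂ → Matrix n n ℂ := hf.localInverse f _ S₀ with hgdef
  have hfS₀ : f S₀ = A t₀ := hsq
  have hg : HasStrictFDerivAt g ((sylvCLE hS₀PD).symm : Matrix n n ℂ →L[ℂ] Matrix n n ℂ)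
      (f S₀) := hf.to_localInverse
  have gval : g (f S₀) = S₀ := hf.localInverse_apply_image
  -- eventual Hermitianness of g
  have hsrc_nhds : (hf.toOpenPartialHomeomorph f).source ∈ nhds S₀ :=
    (hf.toOpenPartialHomeomorph f).open_source.mem_nhds hf.mem_toOpenPartialHomeomorph_source
  have hstarcont : Continuous (fun M : Matrix n n ℂ => Mᴴ) := by
    have hiso : Isometry (fun M : Matrix n n ℂ => Mᴴ) := by
      apply Isometry.of_dist_eq
      intro a b
      rw [dist_eq_norm, dist_eq_norm, ← Matrix.conjTranspose_sub, Matrix.l2_opNorm_conjTranspose]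
    exact hiso.continuous
  have gcont : ContinuousAt g (f S₀) := hf.localInverse_continuousAt
  have EvHerm : ∀ᶠ y in nhds (f S₀), y.IsHermitian → (g y).IsHermitian := by
    have h1 : ∀ᶠ y in nhds (f S₀), g y ∈ (hf.toOpenPartialHomeomorph f).source :=
      gcont.eventually_mem (by rw [gval]; exact hsrc_nhds)
    have h2 : ∀ᶠ y in nhds (f S₀), (g y)ᴴ ∈ (hf.toOpenPartialHomeomorph f).source := by
      have c2 : ContinuousAt (fun y => (g y)ᴴ) (f S₀) := hstarcont.continuousAt.comp gcont
      apply c2.eventually_mem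
      show (hf.toOpenPartialHomeomorph f).source ∈ nhds ((g (f S₀))ᴴ)
      rw [gval, hS₀PSD.1.eq]
      exact hsrc_nhds
    filter_upwards [h1, h2, hf.eventually_right_inverse] with y hy1 hy2 hy3 hherm
    have hy3' : g y * g y = y := hy3
    have heq : f ((g y)ᴴ) = f (g y) := by
      show (g y)ᴴ * (g y)ᴴ = g y * g y
      rw [← Matrix.conjTranspose_mul, hy3', hherm.eq]
    have hinj := (hf.toOpenPartialHomeomorph f).injOn
    exact hinj hy2 hy1 heq
  -- eventual positive definiteness of g
  have EvPD : ∀ᶠ y in nhds (f S₀), (g y).IsHermitian → (g y).PosDef := by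
    have htend : Filter.Tendsto g (nhds (f S₀)) (nhds S₀) := hf.localInverse_tendsto
    exact htend.eventually (eventually_posDef hS₀PD)
  -- pull back along the path
  have hAt : Filter.Tendsto A (nhds t₀) (nhds (f S₀)) := by
    rw [hfS₀]
    exact hAd.continuousAt
  have Eveq : ∀ᶠ t in nhds t₀, g (A t) = matAbs (X t) := by
    filter_upwards [hAt.eventually (EvHerm.and (EvPD.and hf.eventually_right_inverse))]
      with t ht
    obtain ⟨h1, h2, h3⟩ := ht
    have hherm : (A t).IsHermitian := isHermitian_conjTranspose_mul_self (X t)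
    have hgPD : (g (A t)).PosDef := h2 (h1 hherm)
    have hsq2 : (g (A t)) ^ 2 = A t := by rw [pow_two]; exact h3
    rw [matAbs_eq]; exact eq_msqrt_of_sq_eq hgPD.posSemidef (posSemidef_conjTranspose_mul_self (X t)) hsq2
  -- the derivative of t ↦ g (A t)
  set H : Matrix n n ℂ := (sylvCLE hS₀PD).symm A' with hHdef
  have hgA : HasDerivAt (fun t => g (A t)) H t₀ := by
    have h1 : HasFDerivAt g
        (((sylvCLE hS₀PD).symm : Matrix n n ℂ →L[ℂ] Matrix n n ℂ).restrictScalars ℝ) (A t₀) := by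
      rw [← hfS₀]
      exact hg.hasFDerivAt.restrictScalars ℝ
    exact h1.comp_hasDerivAt t₀ hAd
  -- compose with trace and re
  set T : Matrix n n ℂ →L[ℝ] ℂ :=
    LinearMap.toContinuousLinearMap ((Matrix.traceLinearMap n ℂ ℂ).restrictScalars ℝ) with hTdef
  have hTr : HasDerivAt (fun t => ((g (A t)).trace).re) ((H.trace).re) t₀ := by
    have h3 : HasDerivAt (fun t => (g (A t)).trace) (H.trace) t₀ :=
      T.hasFDerivAt.comp_hasDerivAt t₀ hgA
    exact Complex.reCLM.hasFDerivAt.comp_hasDerivAt t₀ h3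
  -- transfer along the eventual equality
  have hfinal : HasDerivAt (fun t => traceNorm (X t)) ((H.trace).re) t₀ := by
    apply hTr.congr_of_eventuallyEq
    filter_upwards [Eveq] with t ht
    show traceNorm (X t) = ((g (A t)).trace).re
    rw [ht]
    rfl
  -- compute the value of the derivative
  have hdet : IsUnit S₀.det := (Matrix.isUnit_iff_isUnit_det S₀).mp hS₀PD.isUnit
  have hLH : S₀ * H + H * S₀ = A' := by
    have := (sylvCLE hS₀PD).apply_symm_apply A'
    rw [← this, sylvCLE_apply, hHdef]
  have htrace2 : (S₀⁻¹ * A').trace = 2 * H.trace := by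
    rw [← hLH, Matrix.mul_add, Matrix.trace_add]
    have e1 : S₀⁻¹ * (S₀ * H) = H := by
      rw [← Matrix.mul_assoc, Matrix.nonsing_inv_mul _ hdet, Matrix.one_mul]
    have e2 : (S₀⁻¹ * (H * S₀)).trace = H.trace := by
      rw [← Matrix.mul_assoc, Matrix.trace_mul_cycle,
        Matrix.mul_nonsing_inv _ hdet, Matrix.one_mul]
    rw [e1, e2]
    ring
  have hconj : (S₀⁻¹ * (X'ᴴ * X t₀)).trace = star ((S₀⁻¹ * ((X t₀)ᴴ * X')).trace) := by
    rw [← Matrix.trace_conjTranspose]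
    have hinvH : (S₀⁻¹)ᴴ = S₀⁻¹ := hS₀PD.1.inv.eq
    rw [Matrix.conjTranspose_mul, hinvH, Matrix.conjTranspose_mul,
      Matrix.conjTranspose_conjTranspose, Matrix.trace_mul_comm]
  have hsplit : S₀⁻¹ * A' = S₀⁻¹ * (X'ᴴ * X t₀) + S₀⁻¹ * ((X t₀)ᴴ * X') := by
    rw [hA'def, Matrix.mul_add]
  have hw : ((S₀⁻¹ * A').trace).re = 2 * ((S₀⁻¹ * ((X t₀)ᴴ * X')).trace).re := by
    rw [hsplit, Matrix.trace_add, hconj, Complex.add_re]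
    simp [Complex.star_def]
    ring
  have hval : (H.trace).re = ((S₀⁻¹ * ((X t₀)ᴴ * X')).trace).re := by
    have h6 := congrArg Complex.re htrace2
    rw [hw] at h6
    have h7 : ((2 : ℂ) * H.trace).re = 2 * (H.trace).re := by simp
    rw [h7] at h6
    linarith
  rw [Matrix.mul_assoc, ← hval]
  exact hfinal

end Aux

/-- **Derivative of the trace norm along a differentiable matrix path.**
If `X : ℝ → Matrix n n ℂ` is entrywise differentiable at `t₀` with derivative `X'` and `X t₀`
is invertible, then `t ↦ ‖X t‖₁` is differentiable at `t₀` with derivative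
`Re trace (|X t₀|⁻¹ * (X t₀)ᴴ * X')`. -/
theorem traceNorm_hasDerivAt {n : Type*} [Fintype n] [DecidableEq n] [Nonempty n]
    (X : ℝ → Matrix n n ℂ) (X' : Matrix n n ℂ) (t₀ : ℝ)
    (hX : ∀ i j, HasDerivAt (fun t => X t i j) (X' i j) t₀)
    (hinv : IsUnit (X t₀)) :
    HasDerivAt (fun t => traceNorm (X t))
      ((((matAbs (X t₀))⁻¹ * (X t₀)ᴴ * X').trace).re) t₀ :=
  traceNorm_hasDerivAt_aux X X' t₀ hX hinv
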